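/- Let n ≥ 4 be even and let C_n = (V, w) be the n-vertex cycle graph with all edge weights equal to 1 (i.e., w({i,i+1}) = 1 for i = 1,…,n−1, w({n,1}) = 1, and w(e) = 0 for all other e ∈ V^(2)). Then the connectivity linear-query certificate complexity of C_n satisfies con-cert(C_n) ≥ n/4. -/

import Mathlib

open Finset Matrix

/-- The set of edge slots: 2-element subsets of the vertex set `Fin n`. -/
abbrev EdgeSlot (n : ℕ) := {e : Finset (Fin n) // e.card = 2}

/-- Weight of the cut with shore `S`: sum of weights of edge slots with exactly
one endpoint in `S`. -/
noncomputable def cutWeight (n : ℕ) (w : EdgeSlot n → ℝ) (S : Finset (Fin n)) : ℝ :=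
  ∑ e : EdgeSlot n, if (e.1 ∩ S).card = 1 then w e else 0

/-- `λ(G)`: the minimum cut weight over all shores `∅ ≠ S ⊊ V`. -/
noncomputable def minCutVal (n : ℕ) (w : EdgeSlot n → ℝ) : ℝ :=
  sInf {x : ℝ | ∃ S : Finset (Fin n), S.Nonempty ∧ S ≠ Finset.univ ∧ cutWeight n w S = x}

/-- The at-least-τ linear-query certificate complexity: the least `k` such that some
`k`-row query matrix `A` certifies that every nonnegative `w'` consistent with the
answers on `w` has minimum cut value at least `τ`. -/
noncomputable def atLeastCert (n : ℕ) (τ : ℝ) (w : EdgeSlot n → ℝ) : ℕ :=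
  sInf {k : ℕ | ∃ A : Matrix (Fin k) (EdgeSlot n) ℝ,
    ∀ w' : EdgeSlot n → ℝ, (∀ e, 0 ≤ w' e) → A.mulVec w = A.mulVec w' →
      τ ≤ minCutVal n w'}

/-- The minimum-cut linear-query certificate complexity. -/
noncomputable def mincutCert (n : ℕ) (w : EdgeSlot n → ℝ) : ℕ :=
  sInf {k : ℕ | ∃ A : Matrix (Fin k) (EdgeSlot n) ℝ,
    ∀ w' : EdgeSlot n → ℝ, (∀ e, 0 ≤ w' e) → A.mulVec w = A.mulVec w' →
      minCutVal n w' = minCutVal n w}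

/-- The connectivity linear-query certificate complexity. -/
noncomputable def conCert (n : ℕ) (w : EdgeSlot n → ℝ) : ℕ :=
  sInf {k : ℕ | ∃ A : Matrix (Fin k) (EdgeSlot n) ℝ,
    ∀ w' : EdgeSlot n → ℝ, (∀ e, 0 ≤ w' e) → A.mulVec w = A.mulVec w' →
      (0 < minCutVal n w' ↔ 0 < minCutVal n w)}

/-- Row indices of the universal cut-edge incidence matrix: nonempty sets of
vertices not containing vertex `1` (represented as `0 : Fin n`). -/
abbrev Shore (n : ℕ) [NeZero n] := {S : Finset (Fin n) // S.Nonempty ∧ (0 : Fin n) ∉ S}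

/-- The universal cut-edge incidence matrix `M_n`. -/
noncomputable def Mn (n : ℕ) [NeZero n] : Matrix (Shore n) (EdgeSlot n) ℝ :=
  fun S e => if (e.1 ∩ S.1).card = 1 then 1 else 0

/-- `τ`-cut-rank of a graph: the minimum rank of a matrix `X ≤ M_n` (entrywise)
with every entry of `Xw` at least `τ`. -/
noncomputable def cutRank (n : ℕ) [NeZero n] (τ : ℝ) (w : EdgeSlot n → ℝ) : ℕ :=
  sInf {r : ℕ | ∃ X : Matrix (Shore n) (EdgeSlot n) ℝ,
    (∀ S e, X S e ≤ Mn n S e) ∧ (∀ S, τ ≤ X.mulVec w S) ∧ X.rank = r}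

/-- The weight vector of the `n`-cycle with unit weights. -/
noncomputable def cycleWeight (n : ℕ) [NeZero n] : EdgeSlot n → ℝ :=
  fun e => if ∃ i : Fin n, e.1 = {i, i + 1} then 1 else 0

open scoped Fin.NatCast Fin.CommRing

lemma exists_ker {k m : ℕ} (hkm : k < m) (M : Matrix (Fin k) (Fin m) ℝ) :
    ∃ c : Fin m → ℝ, c ≠ 0 ∧ M.mulVec c = 0 := by
  by_contra h
  push_neg at h
  have hinj : Function.Injective M.mulVecLin := by
    intro a b hab
    by_contra hne
    refine h (a - b) (sub_ne_zero.mpr hne) ?_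
    have := map_sub M.mulVecLin a b
    simp only [Matrix.mulVecLin_apply] at this hab
    rw [show M.mulVec (a-b) = _ from this, hab, sub_self]
  have := LinearMap.finrank_le_finrank_of_injective hinj
  simp [Module.finrank_pi] at this
  omega

lemma exists_boundary {n : ℕ} [NeZero n] (S : Finset (Fin n)) (h1 : S.Nonempty)
    (h2 : S ≠ Finset.univ) : ∃ j : Fin n, j ∈ S ∧ j + 1 ∉ S := by
  by_contra h
  push_neg at h
  obtain ⟨a, ha⟩ := h1
  have key : ∀ t : ℕ, a + (t : Fin n) ∈ S := by
    intro t
    induction t with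
    | zero => simpa using ha
    | succ t ih =>
      have : a + ((t : Fin n) + 1) ∈ S := by
        have := h _ ih
        rwa [add_assoc] at this
      simpa [Nat.cast_add, Nat.cast_one] using this
  apply h2
  ext v
  simp only [Finset.mem_univ, iff_true]
  have := key ((v - a).val)
  rwa [Fin.cast_val_eq_self, add_sub_cancel] at this



section Cyc
variable {n : ℕ} [NeZero n]

lemma natCast_fin_eq_zero_iff (a : ℕ) : ((a : Fin n) = 0) ↔ a % n = 0 := by
  constructor
  · intro h
    have := congrArg Fin.val h
    simpa [Fin.val_natCast] using this
  · intro h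
    apply Fin.ext
    simp [Fin.val_natCast, h]

lemma fin_one_ne_zero (hn : 4 ≤ n) : (1 : Fin n) ≠ 0 := by
  intro h
  have h2 : ((1 : ℕ) : Fin n) = 0 := by simpa using h
  rw [natCast_fin_eq_zero_iff] at h2
  have : 1 % n = 1 := Nat.mod_eq_of_lt (by omega)
  omega

lemma fin_two_ne_zero (hn : 4 ≤ n) : (2 : Fin n) ≠ 0 := by
  intro h
  have h2 : ((2 : ℕ) : Fin n) = 0 := by simpa using h
  rw [natCast_fin_eq_zero_iff] at h2
  have : 2 % n = 2 := Nat.mod_eq_of_lt (by omega)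
  omega

lemma self_ne_add_one (hn : 4 ≤ n) (j : Fin n) : j ≠ j + 1 := by
  intro h
  exact fin_one_ne_zero hn ((left_eq_add (a := j)).mp h)

/-- The cycle edge with lower endpoint `j`. -/
def cE (hn : 4 ≤ n) (j : Fin n) : EdgeSlot n :=
  ⟨{j, j + 1}, Finset.card_pair (self_ne_add_one hn j)⟩

lemma finset_pair_eq_pair_iff {α : Type*} [DecidableEq α] {a b c d : α} :
    ({a, b} : Finset α) = {c, d} ↔ (a = c ∧ b = d) ∨ (a = d ∧ b = c) := by
  rw [← Finset.coe_inj]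
  push_cast
  exact Set.pair_eq_pair_iff

lemma cE_injective (hn : 4 ≤ n) : Function.Injective (cE hn) := by
  intro j l h
  have h1 : ({j, j+1} : Finset (Fin n)) = {l, l+1} := congrArg Subtype.val h
  rw [finset_pair_eq_pair_iff] at h1
  rcases h1 with ⟨h1, _⟩ | ⟨h1, h2⟩
  · exact h1
  · exfalso
    have h3 : j = j + 1 + 1 := by rw [h2]; exact h1
    have : j = j + 2 := h3.trans (by ring)
    exact fin_two_ne_zero hn ((left_eq_add (a := j)).mp this)

lemma cycleWeight_cE (hn : 4 ≤ n) (j : Fin n) : cycleWeight n (cE hn j) = 1 := by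
  unfold cycleWeight
  rw [if_pos ⟨j, rfl⟩]

lemma cycleWeight_eq_zero (hn : 4 ≤ n) {e : EdgeSlot n}
    (he : ∀ j : Fin n, e ≠ cE hn j) : cycleWeight n e = 0 := by
  unfold cycleWeight
  rw [if_neg]
  rintro ⟨i, hi⟩
  exact he i (Subtype.ext hi)

lemma cycleWeight_nonneg (e : EdgeSlot n) : 0 ≤ cycleWeight n e := by
  unfold cycleWeight; split <;> norm_num

end Cyc

section Cyc2
variable {n : ℕ} [NeZero n]

lemma cutWeight_nonneg {w : EdgeSlot n → ℝ} (hw : ∀ e, 0 ≤ w e) (S : Finset (Fin n)) :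
    0 ≤ cutWeight n w S := by
  apply Finset.sum_nonneg
  intro e _
  split
  · exact hw e
  · exact le_refl 0

lemma pair_inter_card_one {j : Fin n} (hn : 4 ≤ n) {S : Finset (Fin n)}
    (h1 : j ∈ S) (h2 : j + 1 ∉ S) : (({j, j+1} : Finset (Fin n)) ∩ S).card = 1 := by
  have : ({j, j+1} : Finset (Fin n)) ∩ S = {j} := by
    ext v
    simp only [Finset.mem_inter, Finset.mem_insert, Finset.mem_singleton]
    constructor
    · rintro ⟨hv1 | hv1, hv2⟩
      · exact hv1
      · exact absurd (hv1 ▸ hv2) h2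
    · rintro rfl
      exact ⟨Or.inl rfl, h1⟩
  rw [this, Finset.card_singleton]

lemma pair_inter_card_ne_one {x y : Fin n} {S : Finset (Fin n)}
    (h : x ∈ S ↔ y ∈ S) (hxy : x ≠ y) : (({x, y} : Finset (Fin n)) ∩ S).card ≠ 1 := by
  by_cases hx : x ∈ S
  · have : ({x, y} : Finset (Fin n)) ∩ S = {x, y} := by
      rw [Finset.inter_eq_left]
      intro v hv
      simp only [Finset.mem_insert, Finset.mem_singleton] at hv
      rcases hv with rfl | rfl
      · exact hx
      · exact h.mp hx
    rw [this, Finset.card_pair hxy]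
    omega
  · have : ({x, y} : Finset (Fin n)) ∩ S = ∅ := by
      ext v
      simp only [Finset.mem_inter, Finset.mem_insert, Finset.mem_singleton,
        Finset.notMem_empty, iff_false, not_and]
      rintro (rfl | rfl)
      · exact hx
      · exact fun hv => hx (h.mpr hv)
    rw [this, Finset.card_empty]
    omega

/-- Min cut value of the unit cycle is at least 1. -/
lemma one_le_minCut_cycle (hn : 4 ≤ n) : 1 ≤ minCutVal n (cycleWeight n) := by
  apply le_csInf
  · refine ⟨cutWeight n (cycleWeight n) {0}, {0}, ⟨0, Finset.mem_singleton_self 0⟩, ?_, rfl⟩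
    intro h
    have : (1 : Fin n) ∈ ({0} : Finset (Fin n)) := h ▸ Finset.mem_univ 1
    exact fin_one_ne_zero hn (Finset.mem_singleton.mp this)
  · rintro x ⟨S, hS1, hS2, rfl⟩
    obtain ⟨j, hj1, hj2⟩ := exists_boundary S hS1 hS2
    have hterm : (if ((cE hn j).1 ∩ S).card = 1 then cycleWeight n (cE hn j) else 0) = 1 := by
      have hc : ((cE hn j).1 ∩ S).card = 1 := pair_inter_card_one hn hj1 hj2
      rw [if_pos hc, cycleWeight_cE hn]
    calc (1:ℝ) = _ := hterm.symm
      _ ≤ cutWeight n (cycleWeight n) S := by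
          apply Finset.single_le_sum (f := fun e : EdgeSlot n =>
            if (e.1 ∩ S).card = 1 then cycleWeight n e else 0)
          · intro e _
            split
            · exact cycleWeight_nonneg e
            · exact le_refl 0
          · exact Finset.mem_univ _

end Cyc2

section Bmat
variable {n : ℕ} [NeZero n]

def iota1 {m : ℕ} (h : n = m + m) (i : Fin m) : Fin n := ⟨i.val, by omega⟩
def iota2 {m : ℕ} (h : n = m + m) (i : Fin m) : Fin n := ⟨i.val + m, by omega⟩
def repI {m : ℕ} (h : n = m + m) (j : Fin n) : Fin m :=
  ⟨j.val % m, Nat.mod_lt _ (by have := j.isLt; omega)⟩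

noncomputable def Bmat (hn : 4 ≤ n) {m : ℕ} (h : n = m + m) :
    Matrix (EdgeSlot n) (Fin m) ℝ :=
  fun e i => if e = cE hn (iota1 h i) ∨ e = cE hn (iota2 h i) then 1 else 0

lemma iota1_val {m : ℕ} (h : n = m + m) (i : Fin m) : (iota1 h i).val = i.val := rfl
lemma iota2_val {m : ℕ} (h : n = m + m) (i : Fin m) : (iota2 h i).val = i.val + m := rfl
lemma repI_val {m : ℕ} (h : n = m + m) (j : Fin n) : (repI h j).val = j.val % m := rfl

lemma Bmat_mulVec_cE (hn : 4 ≤ n) {m : ℕ} (h : n = m + m) (c : Fin m → ℝ) (j : Fin n) :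
    (Bmat hn h).mulVec c (cE hn j) = c (repI h j) := by
  have hm2 : 2 ≤ m := by omega
  have hjn := j.isLt
  unfold Matrix.mulVec dotProduct Bmat
  simp only [ite_mul, one_mul, zero_mul]
  rw [Finset.sum_eq_single (repI h j)]
  · rw [if_pos]
    by_cases hj : j.val < m
    · left
      congr 1
      apply Fin.ext
      rw [iota1_val, repI_val, Nat.mod_eq_of_lt hj]
    · right
      congr 1
      apply Fin.ext
      rw [iota2_val, repI_val]
      have h2 : j.val % m = j.val - m := by
        rw [Nat.mod_eq_sub_mod (by omega)]
        exact Nat.mod_eq_of_lt (by omega)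
      omega
  · intro i _ hi
    have him := i.isLt
    rw [if_neg]
    rintro (he | he)
    · have h1 := cE_injective hn he.symm
      have hv : i.val = j.val := congrArg Fin.val h1
      apply hi
      apply Fin.ext
      rw [repI_val, Nat.mod_eq_of_lt (by omega)]
      omega
    · have h1 := cE_injective hn he.symm
      have hv : i.val + m = j.val := congrArg Fin.val h1
      apply hi
      apply Fin.ext
      rw [repI_val]
      have h2 : j.val % m = j.val - m := by
        rw [Nat.mod_eq_sub_mod (by omega)]
        exact Nat.mod_eq_of_lt (by omega)
      omega
  · intro hmem
    exact absurd (Finset.mem_univ _) hmem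

lemma Bmat_mulVec_nonedge (hn : 4 ≤ n) {m : ℕ} (h : n = m + m) (c : Fin m → ℝ)
    {e : EdgeSlot n} (he : ∀ j : Fin n, e ≠ cE hn j) :
    (Bmat hn h).mulVec c e = 0 := by
  unfold Matrix.mulVec dotProduct Bmat
  apply Finset.sum_eq_zero
  intro i _
  simp only [ite_mul, one_mul, zero_mul]
  rw [if_neg]
  rintro (h1 | h1)
  · exact he _ h1
  · exact he _ h1

end Bmat

section Key
variable {n : ℕ} [NeZero n]

lemma key_bound (hn4 : 4 ≤ n) (hne : Even n) (k : ℕ)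
    (A : Matrix (Fin k) (EdgeSlot n) ℝ)
    (hA : ∀ w' : EdgeSlot n → ℝ, (∀ e, 0 ≤ w' e) →
      A.mulVec (cycleWeight n) = A.mulVec w' →
      (0 < minCutVal n w' ↔ 0 < minCutVal n (cycleWeight n))) : n ≤ 4 * k := by
  by_contra hcon
  push_neg at hcon
  obtain ⟨m, hm⟩ := hne
  have hm2 : 2 ≤ m := by omega
  have hkm : k < m := by omega
  -- kernel vector
  obtain ⟨c0, hc0ne, hc0⟩ := exists_ker hkm (A * Bmat hn4 hm)
  obtain ⟨j1, hj1⟩ : ∃ j, c0 j ≠ 0 := by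
    by_contra hc; push_neg at hc
    exact hc0ne (funext fun j => hc j)
  set c1 : Fin m → ℝ := if c0 j1 < 0 then c0 else -c0 with hc1def
  have hc1mv : (A * Bmat hn4 hm).mulVec c1 = 0 := by
    rw [hc1def]; split
    · exact hc0
    · rw [Matrix.mulVec_neg, hc0, neg_zero]
  have hc1neg : ∃ j, c1 j < 0 := by
    rw [hc1def]; split
    · exact ⟨j1, by assumption⟩
    · refine ⟨j1, ?_⟩
      rename_i hpos
      push_neg at hpos
      have : 0 < c0 j1 := lt_of_le_of_ne hpos (Ne.symm hj1)
      simpa using this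
  have : Nonempty (Fin m) := ⟨⟨0, by omega⟩⟩
  obtain ⟨i0, -, hi0⟩ := Finset.exists_min_image Finset.univ c1 Finset.univ_nonempty
  obtain ⟨jneg, hjneg⟩ := hc1neg
  have hi0neg : c1 i0 < 0 := lt_of_le_of_lt (hi0 jneg (Finset.mem_univ _)) hjneg
  set t : ℝ := -(c1 i0) with htdef
  have ht : 0 < t := by rw [htdef]; linarith
  set c : Fin m → ℝ := t⁻¹ • c1 with hcdef
  have hcmv : (A * Bmat hn4 hm).mulVec c = 0 := by
    rw [hcdef, Matrix.mulVec_smul, hc1mv, smul_zero]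
  have hci0 : c i0 = -1 := by
    rw [hcdef]
    simp only [Pi.smul_apply, smul_eq_mul]
    rw [show c1 i0 = -t by rw [htdef]; ring]
    field_simp
  have hcge : ∀ i, -1 ≤ c i := by
    intro i
    rw [← hci0, hcdef]
    simp only [Pi.smul_apply, smul_eq_mul]
    exact mul_le_mul_of_nonneg_left (hi0 i (Finset.mem_univ _)) (le_of_lt (inv_pos.mpr ht))
  -- the disconnected weight function
  set w' : EdgeSlot n → ℝ := fun e => cycleWeight n e + (Bmat hn4 hm).mulVec c e with hw'def
  have hw'edge : ∀ j : Fin n, w' (cE hn4 j) = 1 + c (repI hm j) := by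
    intro j
    rw [hw'def]
    simp only
    rw [cycleWeight_cE hn4, Bmat_mulVec_cE hn4 hm c j]
  have hw'non : ∀ e : EdgeSlot n, (∀ j : Fin n, e ≠ cE hn4 j) → w' e = 0 := by
    intro e he
    rw [hw'def]
    simp only
    rw [cycleWeight_eq_zero hn4 he, Bmat_mulVec_nonedge hn4 hm c he, add_zero]
  have hw'0 : ∀ e, 0 ≤ w' e := by
    intro e
    by_cases hre : ∃ j : Fin n, e = cE hn4 j
    · obtain ⟨j, rfl⟩ := hre
      rw [hw'edge j]
      have := hcge (repI hm j)
      linarith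
    · push_neg at hre
      rw [hw'non e hre]
  have hAw : A.mulVec (cycleWeight n) = A.mulVec w' := by
    have hsplit : w' = cycleWeight n + (Bmat hn4 hm).mulVec c := by
      funext e; rw [hw'def]; rfl
    rw [hsplit, Matrix.mulVec_add, Matrix.mulVec_mulVec, hcmv, add_zero]
  -- the zero cut
  set a : ℕ := i0.val with hadef
  have ham : a < m := i0.isLt
  set S : Finset (Fin n) :=
    Finset.univ.filter (fun v : Fin n => a + 1 ≤ v.val ∧ v.val ≤ a + m) with hSdef
  have hmemS : ∀ v : Fin n, v ∈ S ↔ (a + 1 ≤ v.val ∧ v.val ≤ a + m) := by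
    intro v
    rw [hSdef, Finset.mem_filter]
    simp
  have hS1 : S.Nonempty := by
    refine ⟨⟨a + 1, by omega⟩, ?_⟩
    rw [hmemS]
    simp
    omega
  have hS2 : S ≠ Finset.univ := by
    intro h
    have h0 : (⟨0, by omega⟩ : Fin n) ∈ S := h ▸ Finset.mem_univ _
    rw [hmemS] at h0
    simp at h0
  have hrep1 : repI hm (iota1 hm i0) = i0 := by
    apply Fin.ext
    rw [repI_val, iota1_val, Nat.mod_eq_of_lt ham]
  have hrep2 : repI hm (iota2 hm i0) = i0 := by
    apply Fin.ext
    rw [repI_val, iota2_val, Nat.add_mod_right, Nat.mod_eq_of_lt ham]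
  have hcut : cutWeight n w' S = 0 := by
    apply Finset.sum_eq_zero
    intro e _
    by_cases hre : ∃ j : Fin n, e = cE hn4 j
    · obtain ⟨j, rfl⟩ := hre
      by_cases hj : j = iota1 hm i0 ∨ j = iota2 hm i0
      · have hw0 : w' (cE hn4 j) = 0 := by
          rcases hj with rfl | rfl
          · rw [hw'edge, hrep1, hci0]; ring
          · rw [hw'edge, hrep2, hci0]; ring
        rw [hw0, ite_self]
      · push_neg at hj
        obtain ⟨hj1, hj2⟩ := hj
        rw [if_neg]
        have hjv1 : j.val ≠ a := by
          intro h; exact hj1 (Fin.ext (by rw [iota1_val]; exact h))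
        have hjv2 : j.val ≠ a + m := by
          intro h; exact hj2 (Fin.ext (by rw [iota2_val]; exact h))
        have hjlt := j.isLt
        have hone : (1 : Fin n).val = 1 := by
          have : ((1:ℕ) : Fin n).val = 1 % n := Fin.val_natCast 1 n
          simpa [Nat.mod_eq_of_lt (show 1 < n by omega)] using this
        have hvadd : (j + 1).val = (j.val + 1) % n := by
          rw [Fin.add_def, hone]
        have hiff : j ∈ S ↔ j + 1 ∈ S := by
          rw [hmemS, hmemS]
          by_cases hc : j.val + 1 < n
          · rw [hvadd, Nat.mod_eq_of_lt hc]
            omega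
          · have hj' : j.val = n - 1 := by omega
            have : (j + 1).val = 0 := by
              rw [hvadd, hj', show n - 1 + 1 = n by omega, Nat.mod_self]
            rw [this]
            omega
        exact pair_inter_card_ne_one hiff (self_ne_add_one hn4 j)
    · push_neg at hre
      rw [hw'non e hre, ite_self]
  -- min cut of w' is ≤ 0
  have hmle : minCutVal n w' ≤ 0 := by
    apply csInf_le
    · refine ⟨0, ?_⟩
      rintro x ⟨S', h1, h2, rfl⟩
      exact cutWeight_nonneg hw'0 S'
    · exact ⟨S, hS1, hS2, hcut⟩
  -- contradiction
  have hiff := hA w' hw'0 hAw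
  have h1 := one_le_minCut_cycle hn4
  have := hiff.mpr (by linarith)
  linarith


end Key

/-- The connectivity linear-query certificate complexity of the unit-weight
`n`-cycle (for `n ≥ 4` even) is at least `n/4`. -/
theorem con_cert_cycle_lower_bound (n : ℕ) [NeZero n] (hn4 : 4 ≤ n) (hne : Even n) :
    (n : ℝ) / 4 ≤ (conCert n (cycleWeight n) : ℝ) := by
  classical
  unfold conCert
  set Kset := {k : ℕ | ∃ A : Matrix (Fin k) (EdgeSlot n) ℝ,
    ∀ w' : EdgeSlot n → ℝ, (∀ e, 0 ≤ w' e) →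
      A.mulVec (cycleWeight n) = A.mulVec w' →
      (0 < minCutVal n w' ↔ 0 < minCutVal n (cycleWeight n))} with hKdef
  have hne_set : Kset.Nonempty := by
    set eqv := Fintype.equivFin (EdgeSlot n) with heqv
    refine ⟨Fintype.card (EdgeSlot n),
      (fun i e => if eqv.symm i = e then 1 else 0), ?_⟩
    intro w' _ hA
    have hmv : ∀ v : EdgeSlot n → ℝ, ∀ i,
        Matrix.mulVec (fun i e => if eqv.symm i = e then (1:ℝ) else 0) v i
          = v (eqv.symm i) := by
      intro v i
      unfold Matrix.mulVec dotProduct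
      simp [ite_mul, one_mul, zero_mul, Finset.sum_ite_eq]
    have hww : w' = cycleWeight n := by
      funext e
      have := congrFun hA (eqv e)
      rw [hmv, hmv, Equiv.symm_apply_apply] at this
      exact this.symm
    rw [hww]
  have hmem := Nat.sInf_mem hne_set
  obtain ⟨A, hA⟩ := hmem
  have hb := key_bound hn4 hne _ A hA
  rw [div_le_iff₀ (by norm_num : (0:ℝ) < 4)]
  calc (n:ℝ) ≤ ((4 * sInf Kset : ℕ) : ℝ) := by exact_mod_cast hb
    _ = ((sInf Kset : ℕ) : ℝ) * 4 := by push_cast; ring
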